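/- arXiv:2605.21245 — 6 statements merged into one kernel-verified Lean document; each statement's English description precedes it below -/
import Mathlib

section
/- Suppose ν is a finite Borel measure on the closed unit ball B³ ⊂ ℝ³, and for each small t > 0 there is a measurable function f_t : B³ → [0,1] such that, writing m_t = ∫ f_t dν, R_t = ∫ f_t(r) r dν(r), one has |R_{t,⊥}| ≥ L t and m_t − R_{t,z} ≤ C t² for all sufficiently small t > 0, with constants L > 0, C < ∞. Then a contradiction follows; i.e., no such family (f_t) exists. -/
open MeasureTheory Set Filter

private lemma aux_le_zero {c K ε : ℝ} (hε : 0 < ε)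
    (h : ∀ t ∈ Ioo (0:ℝ) ε, c ≤ K * t) : c ≤ 0 := by
  have h1 : Tendsto (fun t : ℝ => K * t) (nhdsWithin 0 (Ioi 0)) (nhds 0) := by
    have h2 : Tendsto (fun t : ℝ => K * t) (nhds 0) (nhds (K * 0)) :=
      (continuous_const.mul continuous_id).tendsto 0
    rw [mul_zero] at h2
    exact h2.mono_left nhdsWithin_le_nhds
  refine ge_of_tendsto h1 ?_
  filter_upwards [Ioo_mem_nhdsGT_of_mem ⟨le_refl (0:ℝ), hε⟩] with t ht using h t ht

set_option maxHeartbeats 1000000 in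
/-- No family of response functions f_t : B³ → [0,1] over a fixed finite
Borel measure ν on the closed unit ball can satisfy the boundary-contact scaling
|R_{t,⊥}| ≥ L t and m_t − R_{t,z} ≤ C t² for all sufficiently small t > 0. -/
theorem stmt2 (ν : Measure (EuclideanSpace ℝ (Fin 3))) [IsFiniteMeasure ν]
    (hball : ν {r : EuclideanSpace ℝ (Fin 3) | ‖r‖ ≤ 1}ᶜ = 0)
    (f : ℝ → EuclideanSpace ℝ (Fin 3) → ℝ)
    (hmeas : ∀ t, Measurable (f t))
    (hf : ∀ t r, 0 ≤ f t r ∧ f t r ≤ 1)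
    (m : ℝ → ℝ) (hm : ∀ t, m t = ∫ r, f t r ∂ν)
    (R : ℝ → EuclideanSpace ℝ (Fin 3)) (hR : ∀ t, R t = ∫ r, f t r • r ∂ν)
    (L C : ℝ) (hL : 0 < L)
    (ε : ℝ) (hε : 0 < ε)
    (hscal : ∀ t ∈ Ioo (0 : ℝ) ε,
      L * t ≤ Real.sqrt ((R t 0) ^ 2 + (R t 1) ^ 2) ∧ m t - R t 2 ≤ C * t ^ 2) :
    False := by
  classical
  set S : ℝ → Set (EuclideanSpace ℝ (Fin 3)) := fun δ =>
    {r | (1 - r 2 < δ ∧ ‖r‖ ≤ 1) ∧ ¬(r 0 = 0 ∧ r 1 = 0)} with hSdef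
  have hz : ∀ i : Fin 3, Measurable fun r : EuclideanSpace ℝ (Fin 3) => r i := fun i =>
    (EuclideanSpace.proj (𝕜 := ℝ) i).continuous.measurable
  have hSm : ∀ δ, MeasurableSet (S δ) := by
    intro δ
    apply MeasurableSet.inter
    · exact (measurableSet_lt (measurable_const.sub (hz 2)) measurable_const).inter
        (measurableSet_le measurable_norm measurable_const)
    · exact ((hz 0 (measurableSet_singleton 0)).inter (hz 1 (measurableSet_singleton 0))).compl
  -- basic ball facts
  have hball' : ∀ r : EuclideanSpace ℝ (Fin 3), ‖r‖ ≤ 1 →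
      r 0 ^ 2 + r 1 ^ 2 + r 2 ^ 2 ≤ 1 := by
    intro r hr
    have h1 : ‖r‖ ^ 2 ≤ 1 := by nlinarith [norm_nonneg r]
    rw [EuclideanSpace.norm_eq, Real.sq_sqrt (by positivity)] at h1
    simpa [Fin.sum_univ_three, Real.norm_eq_abs, sq_abs] using h1
  have hcoord1 : ∀ r : EuclideanSpace ℝ (Fin 3), ‖r‖ ≤ 1 → ∀ i : Fin 3, |r i| ≤ 1 := by
    intro r hr i
    have hs := hball' r hr
    have hle : (r i) ^ 2 ≤ ∑ j, (r j) ^ 2 :=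
      Finset.single_le_sum (f := fun j => (r j) ^ 2) (fun j _ => sq_nonneg _)
        (Finset.mem_univ i)
    rw [Fin.sum_univ_three] at hle
    have h1 : (r i) ^ 2 ≤ 1 := by linarith
    calc |r i| = Real.sqrt ((r i) ^ 2) := (Real.sqrt_sq_eq_abs _).symm
    _ ≤ Real.sqrt 1 := Real.sqrt_le_sqrt h1
    _ = 1 := Real.sqrt_one
  have hcoord : ∀ r : EuclideanSpace ℝ (Fin 3), ‖r‖ ≤ 1 → ∀ i : Fin 3, i = 0 ∨ i = 1 →
      |r i| ≤ Real.sqrt (2 * (1 - r 2)) := by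
    intro r hr i hi
    have hs := hball' r hr
    have h2 := abs_le.1 (hcoord1 r hr 2)
    have hkey : (r i) ^ 2 ≤ 2 * (1 - r 2) := by
      rcases hi with rfl | rfl <;>
        nlinarith [sq_nonneg (1 - r 2), sq_nonneg (r 0), sq_nonneg (r 1)]
    calc |r i| = Real.sqrt ((r i) ^ 2) := (Real.sqrt_sq_eq_abs _).symm
    _ ≤ _ := Real.sqrt_le_sqrt hkey
  have hae : ∀ᵐ r ∂ν, ‖r‖ ≤ 1 := by
    rw [ae_iff, ← compl_setOf]; exact hball
  -- integrability helper
  have hint : ∀ (g : EuclideanSpace ℝ (Fin 3) → ℝ) (B : ℝ), Measurable g →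
      (∀ᵐ r ∂ν, |g r| ≤ B) → Integrable g ν := by
    intro g B hg hB
    refine Integrable.mono' (integrable_const B) hg.aestronglyMeasurable ?_
    simpa [Real.norm_eq_abs] using hB
  -- the key estimate
  have key : ∀ lam > (0:ℝ), ∀ δ > (0:ℝ), L ≤ lam * (ν (S δ)).toReal + 2 * C / lam := by
    intro lam hlam δ hδ
    set V := (ν (S δ)).toReal with hV
    have hV0 : 0 ≤ V := ENNReal.toReal_nonneg
    set sδ := Real.sqrt (2 * δ) with hsδ
    have hsδ0 : 0 < sδ := Real.sqrt_pos.2 (by linarith)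
    have hmain : ∀ t ∈ Ioo (0:ℝ) ε, L - lam * V - 2 * C / lam ≤ (4 * C / sδ) * t := by
      rintro t ⟨ht0, htε⟩
      have hF := hmeas t
      have hF0 : ∀ r, 0 ≤ f t r := fun r => (hf t r).1
      have hF1 : ∀ r, f t r ≤ 1 := fun r => (hf t r).2
      have hFabs : ∀ r, |f t r| ≤ 1 := fun r => abs_le.2 ⟨by linarith [hF0 r], hF1 r⟩
      set a := lam * t with ha
      have ha0 : 0 < a := mul_pos hlam ht0
      have intF : Integrable (f t) ν := hint _ 1 hF (Eventually.of_forall hFabs)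
      have intFr : Integrable (fun r => f t r • r) ν := by
        refine Integrable.mono' (integrable_const (1:ℝ))
          (Measurable.aestronglyMeasurable (hF.smul measurable_id)) ?_
        filter_upwards [hae] with r hr
        rw [norm_smul]
        calc ‖f t r‖ * ‖r‖ ≤ 1 * 1 := by
              apply mul_le_mul _ hr (norm_nonneg _) zero_le_one
              rw [Real.norm_eq_abs]; exact hFabs r
        _ = 1 := one_mul 1
      have hRi : ∀ i : Fin 3, R t i = ∫ r, f t r * r i ∂ν := by
        intro i
        have h1 := (EuclideanSpace.proj (𝕜 := ℝ) i).integral_comp_comm intFr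
        rw [hR t]
        calc (∫ r, f t r • r ∂ν) i
            = EuclideanSpace.proj (𝕜 := ℝ) i (∫ r, f t r • r ∂ν) := rfl
        _ = ∫ r, EuclideanSpace.proj (𝕜 := ℝ) i (f t r • r) ∂ν := h1.symm
        _ = ∫ r, f t r * r i ∂ν := by simp [smul_eq_mul]
      have intFz : Integrable (fun r => f t r * r 2) ν := by
        refine hint _ 1 (hF.mul (hz 2)) ?_
        filter_upwards [hae] with r hr
        rw [abs_mul]
        exact mul_le_one₀ (hFabs r) (abs_nonneg _) (hcoord1 r hr 2)
      have intF2 : Integrable (fun r => f t r * (1 - r 2)) ν := by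
        refine hint _ 2 (hF.mul (measurable_const.sub (hz 2))) ?_
        filter_upwards [hae] with r hr
        rw [abs_mul]
        have h2 := abs_le.1 (hcoord1 r hr 2)
        have hb : |1 - r 2| ≤ 2 := abs_le.2 ⟨by linarith [h2.2], by linarith [h2.1]⟩
        calc |f t r| * |1 - r 2| ≤ 1 * 2 :=
          mul_le_mul (hFabs r) hb (abs_nonneg _) zero_le_one
        _ = 2 := by norm_num
      -- I = m t - R t 2
      set I := ∫ r, f t r * (1 - r 2) ∂ν with hIdef
      have hIeq : I = m t - R t 2 := by
        rw [hIdef, hm t, hRi 2, ← integral_sub intF intFz]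
        congr 1; funext r; ring
      have hI0 : 0 ≤ I := by
        refine integral_nonneg_of_ae ?_
        filter_upwards [hae] with r hr
        have h2 := abs_le.1 (hcoord1 r hr 2)
        exact mul_nonneg (hF0 r) (by linarith [h2.2])
      have hIC : I ≤ C * t ^ 2 := hIeq ▸ (hscal t ⟨ht0, htε⟩).2
      -- integral bound per transverse coordinate
      have hIint : ∀ i : Fin 3, i = 0 ∨ i = 1 →
          ∫ r, f t r * |r i| ∂ν ≤ a / 2 * V + C * t ^ 2 / a + 2 * (C * t ^ 2) / sδ := by
        intro i hi
        have intLHS : Integrable (fun r => f t r * |r i|) ν := by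
          refine hint _ 1 (hF.mul (hz i).abs) ?_
          filter_upwards [hae] with r hr
          rw [abs_mul, abs_abs]
          exact mul_le_one₀ (hFabs r) (abs_nonneg _) (hcoord1 r hr i)
        have intg : Integrable (fun r => a / 2 + f t r * (1 - r 2) / a) ν :=
          (integrable_const (a / 2)).add (intF2.div_const a)
        have intInd : Integrable ((S δ).indicator
            (fun r => a / 2 + f t r * (1 - r 2) / a)) ν := intg.indicator (hSm δ)
        have intFar : Integrable (fun r => f t r * (2 * (1 - r 2)) / sδ) ν := by
          have : Integrable (fun r => f t r * (2 * (1 - r 2))) ν := by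
            have := intF2.const_mul 2
            refine this.congr ?_
            refine Eventually.of_forall fun r => ?_
            ring
          exact this.div_const sδ
        -- pointwise bound
        have hpt : ∀ᵐ r ∂ν, f t r * |r i| ≤
            (S δ).indicator (fun r => a / 2 + f t r * (1 - r 2) / a) r
              + f t r * (2 * (1 - r 2)) / sδ := by
          filter_upwards [hae] with r hr
          have h2 := abs_le.1 (hcoord1 r hr 2)
          have hz0 : 0 ≤ 1 - r 2 := by linarith [h2.2]
          have hco := hcoord r hr i hi
          have hfar0 : 0 ≤ f t r * (2 * (1 - r 2)) / sδ :=
            div_nonneg (mul_nonneg (hF0 r) (by linarith)) hsδ0.le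
          by_cases hrS : r ∈ S δ
          · rw [Set.indicator_of_mem hrS]
            have h1 : f t r * |r i| ≤ f t r * Real.sqrt (2 * (1 - r 2)) :=
              mul_le_mul_of_nonneg_left hco (hF0 r)
            have h2' : f t r * Real.sqrt (2 * (1 - r 2)) ≤ a / 2 + f t r * (1 - r 2) / a := by
              set s := Real.sqrt (2 * (1 - r 2)) with hs
              have hs0 : 0 ≤ s := Real.sqrt_nonneg _
              have hs2 : s ^ 2 = 2 * (1 - r 2) := Real.sq_sqrt (by linarith)
              have key2 : (2 * a) * (f t r * s) ≤ (2 * a) * (a / 2 + f t r * (1 - r 2) / a) := by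
                have hexp : (2 * a) * (a / 2 + f t r * (1 - r 2) / a)
                    = a ^ 2 + 2 * (f t r * (1 - r 2)) := by
                  field_simp
                rw [hexp]
                have h2z : 2 * (f t r * (1 - r 2)) = f t r * s ^ 2 := by rw [hs2]; ring
                rw [h2z]
                nlinarith [sq_nonneg (a - f t r * s),
                  mul_nonneg (mul_nonneg (hF0 r) (sub_nonneg.2 (hF1 r))) (sq_nonneg s)]
              exact le_of_mul_le_mul_left key2 (by linarith)
            linarith
          · rw [Set.indicator_of_notMem hrS]
            have hrS' : (1 - r 2 < δ ∧ ‖r‖ ≤ 1) → (r 0 = 0 ∧ r 1 = 0) := by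
              intro h
              by_contra hc
              exact hrS ⟨h, hc⟩
            by_cases hfar : δ ≤ 1 - r 2
            · have h4 : |r i| * sδ ≤ 2 * (1 - r 2) := by
                calc |r i| * sδ
                    ≤ Real.sqrt (2 * (1 - r 2)) * Real.sqrt (2 * (1 - r 2)) :=
                      mul_le_mul hco (Real.sqrt_le_sqrt (by linarith)) hsδ0.le
                        (Real.sqrt_nonneg _)
                _ = 2 * (1 - r 2) := Real.mul_self_sqrt (by linarith)
              have h5 : |r i| ≤ 2 * (1 - r 2) / sδ := (le_div_iff₀ hsδ0).2 h4
              calc f t r * |r i| ≤ f t r * (2 * (1 - r 2) / sδ) :=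
                    mul_le_mul_of_nonneg_left h5 (hF0 r)
              _ = 0 + f t r * (2 * (1 - r 2)) / sδ := by ring
            · push_neg at hfar
              have h00 := hrS' ⟨hfar, hr⟩
              have hri : r i = 0 := by rcases hi with rfl | rfl; exacts [h00.1, h00.2]
              rw [hri]
              simpa using hfar0
        have intSum : Integrable (fun r =>
            (S δ).indicator (fun r => a / 2 + f t r * (1 - r 2) / a) r
              + f t r * (2 * (1 - r 2)) / sδ) ν := intInd.add intFar
        have step1 : ∫ r, f t r * |r i| ∂ν ≤
            (∫ r, (S δ).indicator (fun r => a / 2 + f t r * (1 - r 2) / a) r ∂ν)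
              + ∫ r, f t r * (2 * (1 - r 2)) / sδ ∂ν := by
          calc ∫ r, f t r * |r i| ∂ν
              ≤ ∫ r, ((S δ).indicator (fun r => a / 2 + f t r * (1 - r 2) / a) r
                  + f t r * (2 * (1 - r 2)) / sδ) ∂ν := integral_mono_ae intLHS intSum hpt
          _ = _ := integral_add intInd intFar
        -- bound the indicator integral
        have hpt2 : ∀ᵐ r ∂ν, (S δ).indicator (fun r => a / 2 + f t r * (1 - r 2) / a) r ≤
            (S δ).indicator (fun _ => a / 2) r + f t r * (1 - r 2) / a := by
          filter_upwards [hae] with r hr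
          have h2 := abs_le.1 (hcoord1 r hr 2)
          have hh0 : 0 ≤ f t r * (1 - r 2) / a :=
            div_nonneg (mul_nonneg (hF0 r) (by linarith [h2.2])) ha0.le
          by_cases hrS : r ∈ S δ
          · rw [Set.indicator_of_mem hrS, Set.indicator_of_mem hrS]
          · rw [Set.indicator_of_notMem hrS, Set.indicator_of_notMem hrS]
            simpa using hh0
        have intIndC : Integrable ((S δ).indicator (fun _ : EuclideanSpace ℝ (Fin 3) => a / 2)) ν :=
          (integrable_const (a / 2)).indicator (hSm δ)
        have intSum2 : Integrable (fun r =>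
            (S δ).indicator (fun _ : EuclideanSpace ℝ (Fin 3) => a / 2) r
              + f t r * (1 - r 2) / a) ν := intIndC.add (intF2.div_const a)
        have step2 : ∫ r, (S δ).indicator (fun r => a / 2 + f t r * (1 - r 2) / a) r ∂ν ≤
            (∫ r, (S δ).indicator (fun _ : EuclideanSpace ℝ (Fin 3) => a / 2) r ∂ν)
              + ∫ r, f t r * (1 - r 2) / a ∂ν := by
          calc ∫ r, (S δ).indicator (fun r => a / 2 + f t r * (1 - r 2) / a) r ∂ν
              ≤ ∫ r, ((S δ).indicator (fun _ : EuclideanSpace ℝ (Fin 3) => a / 2) r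
                  + f t r * (1 - r 2) / a) ∂ν := integral_mono_ae intInd intSum2 hpt2
          _ = _ := integral_add intIndC (intF2.div_const a)
        have hconst : ∫ r, (S δ).indicator (fun _ : EuclideanSpace ℝ (Fin 3) => a / 2) r ∂ν
            = V * (a / 2) := by
          rw [integral_indicator_const _ (hSm δ)]
          simp [hV, smul_eq_mul, Measure.real]
        have hdiv : ∫ r, f t r * (1 - r 2) / a ∂ν = I / a := integral_div a _
        have hfar' : ∫ r, f t r * (2 * (1 - r 2)) / sδ ∂ν = 2 * I / sδ := by
          rw [integral_div]
          congr 1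
          calc ∫ r, f t r * (2 * (1 - r 2)) ∂ν
              = ∫ r, 2 * (f t r * (1 - r 2)) ∂ν := by congr 1; funext r; ring
          _ = 2 * I := integral_const_mul 2 _
        rw [hconst, hdiv] at step2
        rw [hfar'] at step1
        have hb1 : I / a ≤ C * t ^ 2 / a := by gcongr
        have hb2 : 2 * I / sδ ≤ 2 * (C * t ^ 2) / sδ := by gcongr
        calc ∫ r, f t r * |r i| ∂ν
            ≤ (V * (a / 2) + I / a) + 2 * I / sδ := le_trans step1 (by linarith)
        _ ≤ a / 2 * V + C * t ^ 2 / a + 2 * (C * t ^ 2) / sδ := by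
              have : V * (a / 2) = a / 2 * V := by ring
              linarith [hb1, hb2, this.le, this.ge]
      -- combine the two coordinates
      have hRx : |R t 0| ≤ ∫ r, f t r * |r 0| ∂ν := by
        rw [hRi 0]
        calc |∫ r, f t r * r 0 ∂ν| ≤ ∫ r, |f t r| * |r 0| ∂ν := by
              simpa [Real.norm_eq_abs, abs_mul] using
                norm_integral_le_integral_norm (μ := ν) (fun r => f t r * r 0)
        _ = ∫ r, f t r * |r 0| ∂ν := by
              congr 1; funext r; rw [abs_of_nonneg (hF0 r)]
      have hRy : |R t 1| ≤ ∫ r, f t r * |r 1| ∂ν := by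
        rw [hRi 1]
        calc |∫ r, f t r * r 1 ∂ν| ≤ ∫ r, |f t r| * |r 1| ∂ν := by
              simpa [Real.norm_eq_abs, abs_mul] using
                norm_integral_le_integral_norm (μ := ν) (fun r => f t r * r 1)
        _ = ∫ r, f t r * |r 1| ∂ν := by
              congr 1; funext r; rw [abs_of_nonneg (hF0 r)]
      have hLt : L * t ≤ |R t 0| + |R t 1| := by
        have h0 := (hscal t ⟨ht0, htε⟩).1
        have h2 : (R t 0) ^ 2 + (R t 1) ^ 2 ≤ (|R t 0| + |R t 1|) ^ 2 := by
          nlinarith [abs_nonneg (R t 0), abs_nonneg (R t 1), sq_abs (R t 0), sq_abs (R t 1)]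
        have h1 : Real.sqrt ((R t 0) ^ 2 + (R t 1) ^ 2) ≤ |R t 0| + |R t 1| := by
          calc Real.sqrt ((R t 0) ^ 2 + (R t 1) ^ 2)
              ≤ Real.sqrt ((|R t 0| + |R t 1|) ^ 2) := Real.sqrt_le_sqrt h2
          _ = |R t 0| + |R t 1| := Real.sqrt_sq (by positivity)
        linarith
      have hA : L * t ≤ a * V + 2 * (C * t ^ 2) / a + 4 * (C * t ^ 2) / sδ := by
        have hx := hIint 0 (Or.inl rfl)
        have hy := hIint 1 (Or.inr rfl)
        have : 2 * (C * t ^ 2) / a = C * t ^ 2 / a + C * t ^ 2 / a := by ring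
        have h4 : 4 * (C * t ^ 2) / sδ = 2 * (C * t ^ 2) / sδ + 2 * (C * t ^ 2) / sδ := by ring
        linarith
      have heq1 : 2 * (C * t ^ 2) / a = (2 * C / lam) * t := by
        rw [ha]; field_simp
      have heq2 : 4 * (C * t ^ 2) / sδ = ((4 * C / sδ) * t) * t := by ring
      rw [heq1, heq2, ha] at hA
      have hfin : (L - lam * V - 2 * C / lam) * t ≤ ((4 * C / sδ) * t) * t := by nlinarith
      exact le_of_mul_le_mul_right hfin ht0
    have := aux_le_zero hε hmain
    rw [hV] at *
    linarith
  -- measure of S(1/(n+1)) tends to 0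
  have hanti : Antitone (fun n : ℕ => S (1 / (n + 1 : ℝ))) := by
    intro n' n hn r hr
    obtain ⟨⟨h1, h2⟩, h3⟩ := hr
    refine ⟨⟨lt_of_lt_of_le h1 ?_, h2⟩, h3⟩
    have hc : ((n' : ℝ) + 1) ≤ (n : ℝ) + 1 := by
      have : (n' : ℝ) ≤ (n : ℝ) := Nat.cast_le.mpr hn
      linarith
    exact one_div_le_one_div_of_le (by positivity) hc
  have hempty : ⋂ n : ℕ, S (1 / (n + 1 : ℝ)) = ∅ := by
    ext r
    simp only [mem_iInter, mem_empty_iff_false, iff_false]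
    intro hall
    have h1 : ∀ n : ℕ, 1 - r 2 < 1 / (n + 1 : ℝ) := fun n => (hall n).1.1
    have hzle : 1 - r 2 ≤ 0 := by
      by_contra hpos
      push_neg at hpos
      obtain ⟨n, hn⟩ := exists_nat_one_div_lt hpos
      exact absurd (h1 n) (by linarith)
    obtain ⟨⟨_, hr⟩, hne⟩ := hall 0
    have hs := hball' r hr
    have h20 : 1 ≤ r 2 := by linarith
    have h00 : r 0 = 0 := by
      have : r 0 ^ 2 ≤ 0 := by nlinarith [sq_nonneg (r 1)]
      have := le_antisymm this (sq_nonneg _)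
      exact pow_eq_zero_iff (by norm_num) |>.1 this
    have h10 : r 1 = 0 := by
      have : r 1 ^ 2 ≤ 0 := by nlinarith [sq_nonneg (r 0)]
      have := le_antisymm this (sq_nonneg _)
      exact pow_eq_zero_iff (by norm_num) |>.1 this
    exact hne ⟨h00, h10⟩
  have htend : Tendsto (fun n : ℕ => ν (S (1 / (n + 1 : ℝ)))) atTop (nhds 0) := by
    have h := tendsto_measure_iInter_atTop (μ := ν) (s := fun n : ℕ => S (1 / (n + 1 : ℝ)))
      (fun n => (hSm _).nullMeasurableSet) hanti ⟨0, measure_ne_top ν _⟩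
    rw [hempty] at h
    simpa [Function.comp_def] using h
  have htoReal : Tendsto (fun n : ℕ => (ν (S (1 / (n + 1 : ℝ)))).toReal) atTop (nhds 0) := by
    have h := (ENNReal.tendsto_toReal (a := 0) (by simp)).comp htend
    simpa [Function.comp_def] using h
  -- choose lam and n
  set lam := 4 * (|C| + 1) / L with hlamdef
  have hlam : 0 < lam := by positivity
  have hCl : 2 * C / lam ≤ L / 2 := by
    rw [div_le_iff₀ hlam]
    have hle : L / 2 * lam = 2 * (|C| + 1) := by
      rw [hlamdef]; field_simp; ring
    rw [hle]
    nlinarith [le_abs_self C]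
  obtain ⟨n, hn⟩ := (htoReal.eventually_lt_const
    (show (0:ℝ) < L / (4 * lam) by positivity)).exists
  have hkey := key lam hlam (1 / (n + 1 : ℝ)) (by positivity)
  have hlt : lam * (ν (S (1 / (n + 1 : ℝ)))).toReal < L / 4 := by
    have := mul_lt_mul_of_pos_left hn hlam
    calc lam * (ν (S (1 / (n + 1 : ℝ)))).toReal < lam * (L / (4 * lam)) := this
    _ = L / 4 := by field_simp
  linarith
end

section
/- Let ρ be the standard product-null state on ℂ²⊗ℂ² determined by a 3×3 positive semidefinite block H with tr H > 0. If h_{02} ≠ 0, then the partial transpose ρ^{Γ_B} with respect to the second factor is not positive semidefinite; in particular its principal 2×2 submatrix on span{|01⟩,|10⟩} has negative determinant −|h_{02}|²/(tr H)². -/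
open Matrix ComplexOrder

/-- Index map identifying |00⟩ ↦ 0, |10⟩ ↦ 1, |11⟩ ↦ 2 (the value on |01⟩ is irrelevant). -/
def idx3 : Fin 2 × Fin 2 → Fin 3 := fun p =>
  if p = (0, 0) then 0 else if p = (1, 0) then 1 else 2

/-- The standard product-null state ρ = (1/tr H)·(H placed on span{|00⟩,|10⟩,|11⟩},
with zero |01⟩ row and column). -/
noncomputable def stdState (H : Matrix (Fin 3) (Fin 3) ℂ) :
    Matrix (Fin 2 × Fin 2) (Fin 2 × Fin 2) ℂ :=
  Matrix.of fun p q =>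
    if p = ((0 : Fin 2), (1 : Fin 2)) ∨ q = ((0 : Fin 2), (1 : Fin 2)) then 0
    else H (idx3 p) (idx3 q) / H.trace

/-- Partial transpose with respect to the second (Bob) factor. -/
def ptB (M : Matrix (Fin 2 × Fin 2) (Fin 2 × Fin 2) ℂ) :
    Matrix (Fin 2 × Fin 2) (Fin 2 × Fin 2) ℂ :=
  Matrix.of fun p q => M (p.1, q.2) (q.1, p.2)

/-- If h₀₂ ≠ 0, the partial transpose of the standard product-null state is
not positive semidefinite; its principal 2×2 submatrix on span{|01⟩,|10⟩} has
determinant −|h₀₂|²/(tr H)². -/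
theorem stmt10 (H : Matrix (Fin 3) (Fin 3) ℂ) (hH : H.PosSemidef)
    (htr : 0 < H.trace.re) (h02 : H 0 2 ≠ 0) :
    ptB (stdState H) (0, 1) (0, 1) * ptB (stdState H) (1, 0) (1, 0)
      - ptB (stdState H) (0, 1) (1, 0) * ptB (stdState H) (1, 0) (0, 1)
      = -((‖H 0 2‖ ^ 2 : ℝ) : ℂ) / H.trace ^ 2 ∧
    ¬ (ptB (stdState H)).PosSemidef := by

  have hherm := hH.1
  have htrr : H.trace = (H.trace.re : ℂ) := by
    have h1 : (starRingEnd ℂ) H.trace = H.trace := by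
      have := Matrix.trace_conjTranspose H
      rw [hherm.eq] at this
      exact this.symm
    exact ((Complex.conj_eq_iff_re).mp h1).symm
  have htrne : (H.trace.re : ℝ) ≠ 0 := ne_of_gt htr
  have e1 : ptB (stdState H) (0,1) (0,1) = 0 := by simp [ptB, stdState]
  have e2 : ptB (stdState H) (1,0) (1,0) = H 1 1 / H.trace := by
    simp [ptB, stdState, idx3]
  have e3 : ptB (stdState H) (0,1) (1,0) = H 0 2 / H.trace := by
    simp [ptB, stdState, idx3]
  have e4 : ptB (stdState H) (1,0) (0,1) = H 2 0 / H.trace := by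
    simp [ptB, stdState, idx3]
  have h20 : H 2 0 = (starRingEnd ℂ) (H 0 2) := (hherm.apply 2 0).symm
  have hmul : H 0 2 * H 2 0 = ((‖H 0 2‖ ^ 2 : ℝ) : ℂ) := by
    rw [h20, Complex.mul_conj, Complex.sq_norm]
  constructor
  · rw [e1, e2, e3, e4, zero_mul, zero_sub, div_mul_div_comm, hmul, ← sq, neg_div]
  · intro hp
    have hnsq : Complex.normSq (H 0 2) ≠ 0 := by
      simpa [Complex.normSq_eq_zero] using h02
    set c : ℝ := (|(H 1 1).re| + 1) / Complex.normSq (H 0 2) with hc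
    set a : ℂ := -(c : ℂ) * H 0 2 with ha
    set v : Fin 2 × Fin 2 → ℂ :=
      fun p => if p = (0,1) then a else if p = (1,0) then 1 else 0 with hv
    have hQ := hp.dotProduct_mulVec_nonneg v
    have hQval : star v ⬝ᵥ (ptB (stdState H)) *ᵥ v
        = (starRingEnd ℂ) a * (H 0 2 / H.trace) + a * (H 2 0 / H.trace)
          + H 1 1 / H.trace := by
      simp [hv, dotProduct, mulVec, Fintype.sum_prod_type, Fin.sum_univ_two, Prod.ext_iff,
        ptB, stdState, idx3]
      ring
    have h11 : H 1 1 = ((H 1 1).re : ℂ) := (hherm.coe_re_apply_self 1).symm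
    have hQreal : star v ⬝ᵥ (ptB (stdState H)) *ᵥ v
        = (((-2 * c * Complex.normSq (H 0 2) + (H 1 1).re) / H.trace.re : ℝ) : ℂ) := by
      have hz : (starRingEnd ℂ) (H 0 2) * H 0 2 = (Complex.normSq (H 0 2) : ℂ) := by
        rw [mul_comm, Complex.mul_conj]
      rw [hQval, ha, h20, htrr, h11]
      rw [_root_.map_mul, map_neg, Complex.conj_ofReal]
      push_cast
      simp only [Complex.ofReal_re]
      linear_combination (-2 * (c : ℂ) / (H.trace.re : ℂ)) * hz
    rw [hQreal] at hQ
    have hQre : (0:ℝ) ≤ (-2 * c * Complex.normSq (H 0 2) + (H 1 1).re) / H.trace.re := by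
      exact_mod_cast hQ
    have hcn : c * Complex.normSq (H 0 2) = |(H 1 1).re| + 1 := by
      rw [hc, div_mul_cancel₀ _ hnsq]
    have hneg : (-2 * c * Complex.normSq (H 0 2) + (H 1 1).re) / H.trace.re < 0 := by
      apply div_neg_of_neg_of_pos _ htr
      have h1 : (H 1 1).re ≤ |(H 1 1).re| := le_abs_self _
      nlinarith [abs_nonneg (H 1 1).re]
    linarith
end

section
/- Let ρ be the standard product-null state on ℂ²⊗ℂ² determined by a 3×3 positive semidefinite block H with tr H > 0. If h_{02} = 0, then the partial transpose ρ^{Γ_B} is positive semidefinite. -/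
open Matrix ComplexOrder

/-- If h₀₂ = 0, the partial transpose of the standard product-null state is
positive semidefinite. -/
theorem stmt11 (H : Matrix (Fin 3) (Fin 3) ℂ) (hH : H.PosSemidef)
    (htr : 0 < H.trace.re) (h02 : H 0 2 = 0) :
    (ptB (stdState H)).PosSemidef := by
  have hherm := hH.1
  have hap : ∀ i j, star (H j i) = H i j := fun i j => hherm.apply i j
  have h20 : H 2 0 = 0 := by rw [← hap 2 0, h02]; simp
  have h21 : H 2 1 = star (H 1 2) := by
    conv_lhs => rw [← star_star (H 2 1)]
    rw [hap 1 2]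
  have him : H.trace.im = 0 := by
    have hd : ∀ i, (H i i).im = 0 := by
      intro i
      have := congrArg Complex.im (hap i i)
      simp [Complex.conj_im] at this
      linarith
    simp [Matrix.trace, Matrix.diag, Complex.im_sum, Fin.sum_univ_three, hd]
  have htrC : H.trace = (H.trace.re : ℂ) := by
    apply Complex.ext <;> simp [him]
  have hstr : star H.trace = H.trace := by rw [htrC]; simp
  have htrinv : (0:ℂ) ≤ H.trace⁻¹ := by
    rw [htrC, ← Complex.ofReal_inv, Complex.zero_le_real]
    positivity
  set e := H 1 2 with he
  set c : ℂ := if e = 0 then 1 else star e / e with hc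
  rw [posSemidef_iff_dotProduct_mulVec]
  constructor
  · ext p q
    simp only [conjTranspose_apply]
    fin_cases p <;> fin_cases q <;>
      simp [ptB, stdState, idx3, star_div₀, hstr, hap]
  · intro x
    set y : Fin 3 → ℂ := ![x (0,0), x (1,0), c * x (1,1)] with hy
    have key : star x ⬝ᵥ (ptB (stdState H)) *ᵥ x = H.trace⁻¹ * (star y ⬝ᵥ H *ᵥ y) := by
      simp only [dotProduct, mulVec, Fintype.sum_prod_type, Fin.sum_univ_two,
        Fin.sum_univ_three, ptB, stdState, idx3, of_apply, Pi.star_apply, hy,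
        Matrix.cons_val_zero, Matrix.cons_val_one, Matrix.head_cons, Matrix.cons_val_two,
        Matrix.tail_cons]
      simp only [Prod.mk.injEq, show ((0:Fin 2) = 1) = False by simp,
        show ((1:Fin 2) = 0) = False by simp, and_true, and_false, false_and, true_and,
        if_true, if_false, or_false, false_or, eq_self_iff_true]
      rw [h02, h20, h21, ← he]
      simp only [star_zero, star_one, mul_zero, zero_mul, mul_one, one_mul, add_zero,
        zero_add, or_self, true_or, or_true, if_true]
      have hce : c * e = star e := by
        by_cases h : e = 0
        · simp [hc, h]
        · rw [hc, if_neg h]; field_simp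
      have hces : star c * star e = e := by
        have := congrArg star hce
        simpa using this
      have hcc : star c * c = 1 := by
        by_cases h : e = 0
        · simp [hc, h]
        · have hse : star e ≠ 0 := star_ne_zero.mpr h
          rw [hc, if_neg h, star_div₀]
          field_simp
          exact star_star e
      simp only [star_mul']
      linear_combination (-(star (x (1,0)) * x 1 * H.trace⁻¹)) * hce +
        (-(x (1,0) * star (x 1) * H.trace⁻¹)) * hces +
        (-(x 1 * star (x 1) * H 2 2 * H.trace⁻¹)) * hcc
    rw [key]
    exact mul_nonneg htrinv (hH.dotProduct_mulVec_nonneg y)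
end

section
/- Every positive semidefinite operator ρ of rank two on ℂ² ⊗ ℂ² annihilates some nonzero product vector: there exist nonzero α, β ∈ ℂ² with ρ(α ⊗ β) = 0. -/
open Matrix ComplexOrder

/-- Every binary quadratic form over ℂ has a nontrivial zero. -/
lemma quad_zero (A B C : ℂ) :
    ∃ x y : ℂ, (x ≠ 0 ∨ y ≠ 0) ∧ A*x^2 + B*x*y + C*y^2 = 0 := by
  by_cases hA : A = 0
  · exact ⟨1, 0, Or.inl one_ne_zero, by simp [hA]⟩
  · obtain ⟨s, hs⟩ := IsAlgClosed.exists_pow_nat_eq (k := ℂ) (B^2 - 4*A*C) (n := 2) (by norm_num)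
    refine ⟨(-B + s) / (2*A), 1, Or.inr one_ne_zero, ?_⟩
    have h2A : (2*A) ≠ 0 := by simp [hA]
    field_simp
    linear_combination hs



lemma vne (x y : ℂ) (h : x ≠ 0 ∨ y ≠ 0) : ![x, y] ≠ (0 : Fin 2 → ℂ) := by
  intro he
  rcases h with h | h
  · exact h (by simpa using congrFun he 0)
  · exact h (by simpa using congrFun he 1)

/-- A nonzero vector on Fin 2 × Fin 2 with vanishing "determinant" is a product vector. -/
lemma rank_one_split (u : Fin 2 × Fin 2 → ℂ) (hu : u ≠ 0)
    (hdet : u (0,0) * u (1,1) = u (0,1) * u (1,0)) :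
    ∃ α β : Fin 2 → ℂ, α ≠ 0 ∧ β ≠ 0 ∧ ∀ p, u p = α p.1 * β p.2 := by
  set a := u (0,0) with ha
  set b := u (0,1) with hb
  set c := u (1,0) with hc
  set d := u (1,1) with hd
  have hall : ∀ p : Fin 2 × Fin 2, u p = ![![a,b],![c,d]] p.1 p.2 := by
    rintro ⟨i, j⟩
    fin_cases i <;> fin_cases j <;> simp [ha, hb, hc, hd]
  by_cases hA : a ≠ 0
  · refine ⟨![a, c], ![1, b/a], vne _ _ (Or.inl hA), vne _ _ (Or.inl one_ne_zero), ?_⟩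
    rintro ⟨i, j⟩
    fin_cases i <;> fin_cases j <;> simp [hall ⟨_,_⟩] <;> field_simp
    linear_combination hdet
  · push_neg at hA
    by_cases hB : b = 0
    · have h2 : c ≠ 0 ∨ d ≠ 0 := by
        by_contra h
        push_neg at h
        apply hu
        funext p
        rw [hall p]
        rcases p with ⟨i, j⟩
        fin_cases i <;> fin_cases j <;> simp [hA, hB, h.1, h.2]
      refine ⟨![0, 1], ![c, d], vne _ _ (Or.inr one_ne_zero), vne _ _ h2, ?_⟩
      rintro ⟨i, j⟩
      fin_cases i <;> fin_cases j <;> simp [hall ⟨_,_⟩, hA, hB]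
    · have hC : c = 0 := by
        have h0 : b * c = 0 := by rw [← hdet, hA]; ring
        rcases mul_eq_zero.mp h0 with h | h
        · exact absurd h hB
        · exact h
      refine ⟨![b, d], ![0, 1], vne _ _ (Or.inl hB), vne _ _ (Or.inr one_ne_zero), ?_⟩
      rintro ⟨i, j⟩
      fin_cases i <;> fin_cases j <;> simp [hall ⟨_,_⟩, hA, hC]

/-- Every rank-two positive semidefinite operator on ℂ² ⊗ ℂ² annihilates a
nonzero product vector. -/
theorem stmt13 (ρ : Matrix (Fin 2 × Fin 2) (Fin 2 × Fin 2) ℂ) (hρ : ρ.PosSemidef)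
    (hrank : ρ.rank = 2) :
    ∃ α β : Fin 2 → ℂ, α ≠ 0 ∧ β ≠ 0 ∧ ρ *ᵥ (fun p => α p.1 * β p.2) = 0 := by
  -- the kernel of ρ has dimension 2
  have hrn := LinearMap.finrank_range_add_finrank_ker (ρ.mulVecLin)
  rw [Module.finrank_fintype_fun_eq_card] at hrn
  have hker : Module.finrank ℂ (LinearMap.ker ρ.mulVecLin) = 2 := by
    have : ρ.rank + Module.finrank ℂ (LinearMap.ker ρ.mulVecLin) = 4 := by
      simpa [Matrix.rank] using hrn
    omega
  -- pick a basis v, w of the kernel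
  obtain ⟨bb⟩ : Nonempty (Module.Basis (Fin 2) ℂ (LinearMap.ker ρ.mulVecLin)) :=
    ⟨Module.finBasisOfFinrankEq ℂ _ hker⟩
  set v : Fin 2 × Fin 2 → ℂ := ((bb 0 : LinearMap.ker ρ.mulVecLin) : Fin 2 × Fin 2 → ℂ) with hv
  set w : Fin 2 × Fin 2 → ℂ := ((bb 1 : LinearMap.ker ρ.mulVecLin) : Fin 2 × Fin 2 → ℂ) with hw
  have hvker : ρ *ᵥ v = 0 := (bb 0).2
  have hwker : ρ *ᵥ w = 0 := (bb 1).2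
  have li : LinearIndependent ℂ (fun i => ((bb i : LinearMap.ker ρ.mulVecLin) : Fin 2 × Fin 2 → ℂ)) :=
    bb.linearIndependent.map' (Submodule.subtype _) (Submodule.ker_subtype _)
  -- find a nontrivial zero of the determinant quadratic
  obtain ⟨x, y, hxy, hq⟩ := quad_zero
    (v (0,0) * v (1,1) - v (0,1) * v (1,0))
    (v (0,0) * w (1,1) + w (0,0) * v (1,1) - v (0,1) * w (1,0) - w (0,1) * v (1,0))
    (w (0,0) * w (1,1) - w (0,1) * w (1,0))
  set u : Fin 2 × Fin 2 → ℂ := fun p => x * v p + y * w p with hu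
  have hune : u ≠ 0 := by
    intro h0
    have := Fintype.linearIndependent_iff.mp li ![x, y] ?_ 
    · rcases hxy with h | h
      · exact h (by simpa using this 0)
      · exact h (by simpa using this 1)
    · rw [Fin.sum_univ_two]
      funext p
      have h1 := congrFun h0 p
      simp only [hu, Pi.zero_apply] at h1
      simp only [Matrix.cons_val_zero, Matrix.cons_val_one, Matrix.head_cons,
        Pi.add_apply, Pi.smul_apply, smul_eq_mul, Pi.zero_apply]
      exact h1
  have hdet : u (0,0) * u (1,1) = u (0,1) * u (1,0) := by
    simp only [hu]
    linear_combination hq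
  obtain ⟨α, β, hα, hβ, hfac⟩ := rank_one_split u hune hdet
  refine ⟨α, β, hα, hβ, ?_⟩
  have heq : (fun p : Fin 2 × Fin 2 => α p.1 * β p.2) = x • v + y • w := by
    funext p
    rw [← hfac p]
    simp [hu]
  rw [heq, Matrix.mulVec_add, Matrix.mulVec_smul, Matrix.mulVec_smul, hvker, hwker]
  simp
end

section
/- Let ρ be a positive semidefinite operator on ℂ²⊗H_Y with block form [[A,B],[B†,D]] as above I, and suppose there exist |φ⟩ ∈ supp A, |β⟩ ∈ Ker A with v := ⟨φ|B|β⟩ ≠ 0. Then the partial transpose of ρ with respect to any orthonormal basis of H_Y containing |φ⟩ and |β⟩ is not positive semidefinite: its principal 2×2 submatrix on span{|α₀,β⟩, |α₁,φ⟩} has the form [[0, v],[v̄, *]] with determinant −|v|² < 0. -/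
open Matrix ComplexOrder

/-- Partial transpose on the trusted factor H_Y = ℂⁿ, entrywise in the chosen
orthonormal basis. -/
def ptY {n : ℕ} (M : Matrix (Fin 2 × Fin n) (Fin 2 × Fin n) ℂ) :
    Matrix (Fin 2 × Fin n) (Fin 2 × Fin n) ℂ :=
  Matrix.of fun p q => M (p.1, q.2) (q.1, p.2)

lemma qform_single {m : Type*} [Fintype m] [DecidableEq m]
    (M : Matrix m m ℂ) (i j : m) (c d : ℂ) :
    star (Pi.single i c) ⬝ᵥ (M *ᵥ Pi.single j d) = star c * (M i j * d) := by
  simp [dotProduct, Matrix.mulVec, Pi.single_apply, mul_comm, mul_left_comm,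
    apply_ite, Finset.mul_sum]

/-- If ρ ≥ 0 has block form [[A,B],[B†,D]], |φ⟩ = e_p ∈ supp A,
|β⟩ = e_q ∈ Ker A, and v = ⟨φ|B|β⟩ ≠ 0, then the partial transpose of ρ is not positive
semidefinite: its principal 2×2 submatrix on span{|α₀,β⟩, |α₁,φ⟩} is [[0,v],[v̄,*]]
with determinant −|v|². -/
theorem stmt17 {n : ℕ} (ρ : Matrix (Fin 2 × Fin n) (Fin 2 × Fin n) ℂ)
    (hρ : ρ.PosSemidef)
    (A B : Matrix (Fin n) (Fin n) ℂ)
    (hA : ∀ j k, A j k = ρ (0, j) (0, k))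
    (hB : ∀ j k, B j k = ρ (0, j) (1, k))
    (p q : Fin n)
    (hsupp : ∃ w : Fin n → ℂ, A *ᵥ w = Pi.single p 1)
    (hker : A *ᵥ Pi.single q 1 = 0)
    (hv : B p q ≠ 0) :
    ptY ρ (0, q) (0, q) = 0 ∧
    ptY ρ (0, q) (1, p) = B p q ∧
    ptY ρ (0, q) (0, q) * ptY ρ (1, p) (1, p)
      - ptY ρ (0, q) (1, p) * ptY ρ (1, p) (0, q)
      = -((‖B p q‖ ^ 2 : ℝ) : ℂ) ∧
    ¬ (ptY ρ).PosSemidef := by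
  set v := B p q with hvdef
  have hAq : A q q = 0 := by
    have := congrFun hker q
    simpa [Matrix.mulVec, dotProduct, Pi.single_apply] using this
  have h00 : ptY ρ (0, q) (0, q) = 0 := by
    have : ρ (0, q) (0, q) = 0 := by rw [← hA]; exact hAq
    simpa [ptY] using this
  have h01 : ptY ρ (0, q) (1, p) = v := by
    simp [ptY, hvdef, hB]
  have h10 : ptY ρ (1, p) (0, q) = star v := by
    have h := hρ.1.apply (1, q) (0, p)
    -- h : star (ρ (0,p) (1,q)) = ρ (1,q) (0,p)
    simp only [ptY, Matrix.of_apply]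
    rw [hvdef, hB]
    exact h.symm
  have hdet : ptY ρ (0, q) (0, q) * ptY ρ (1, p) (1, p)
      - ptY ρ (0, q) (1, p) * ptY ρ (1, p) (0, q)
      = -((‖v‖ ^ 2 : ℝ) : ℂ) := by
    rw [h00, h01, h10, zero_mul, zero_sub, Complex.star_def, Complex.mul_conj]
    push_cast [Complex.sq_norm]
    ring
  refine ⟨h00, h01, hdet, ?_⟩
  rintro ⟨hherm, hpos⟩
  set M := ptY ρ
  set r : ℝ := ((M (1, p) (1, p)).re + 1) / (2 * Complex.normSq v) with hr
  set c : ℂ := -(r : ℂ) * v with hc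
  set y : (Fin 2 × Fin n) → ℂ :=
    Pi.single ((0 : Fin 2), q) c + Pi.single ((1 : Fin 2), p) 1 with hy
  have hform := Matrix.PosSemidef.dotProduct_mulVec_nonneg ⟨hherm, hpos⟩ y
  have hexp : star y ⬝ᵥ (M *ᵥ y)
      = star c * (M (0, q) (0, q) * c) + star c * (M (0, q) (1, p) * 1)
        + star (1 : ℂ) * (M (1, p) (0, q) * c) + star (1 : ℂ) * (M (1, p) (1, p) * 1) := by
    rw [hy]
    rw [star_add, Matrix.mulVec_add, add_dotProduct,
      dotProduct_add, dotProduct_add]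
    simp only [qform_single]
    ring
  rw [hexp, h00, h01, h10] at hform
  have hns : (0 : ℝ) < Complex.normSq v := by
    simpa using Complex.normSq_pos.mpr hv
  have hvv : star v * v = (Complex.normSq v : ℂ) := by
    rw [Complex.star_def, mul_comm, Complex.mul_conj]
  have hsc : star c = -(r : ℂ) * star v := by
    rw [hc, star_mul']
    simp [Complex.star_def, Complex.conj_ofReal, mul_comm]
  have hre : (star c * (0 * c) + star c * (v * 1) + star (1:ℂ) * (star v * c)
      + star (1:ℂ) * (M (1, p) (1, p) * 1)).re
      = (M (1, p) (1, p)).re - 2 * r * Complex.normSq v := by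
    have h1 : star c * (v * 1) = ((-(r * Complex.normSq v) : ℝ) : ℂ) := by
      rw [hsc, mul_one, mul_assoc, hvv]
      push_cast
      ring
    have h2 : star (1:ℂ) * (star v * c) = ((-(r * Complex.normSq v) : ℝ) : ℂ) := by
      rw [hc, star_one, one_mul,
        show star v * (-(r:ℂ) * v) = -(r:ℂ) * (star v * v) from by ring, hvv]
      push_cast
      ring
    rw [h1, h2, star_one, one_mul, mul_one]
    simp only [zero_mul, mul_zero, zero_add, Complex.add_re, Complex.ofReal_re]
    ring
  have hform_re : 0 ≤ (star c * (0 * c) + star c * (v * 1) + star (1:ℂ) * (star v * c)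
      + star (1:ℂ) * (M (1, p) (1, p) * 1)).re := by
    rw [Complex.le_def] at hform
    simpa using hform.1
  rw [hre] at hform_re
  have : 2 * r * Complex.normSq v = (M (1, p) (1, p)).re + 1 := by
    rw [hr]
    field_simp
  rw [this] at hform_re
  linarith
end

section
/- Let ρ_{01} = [[A, B],[B†, D]] be positive semidefinite on ℂ²⊗H_Y with A = a|φ⟩⟨φ| for a unit vector |φ⟩ and a > 0. If P_{supp A} B P_{Ker A} = 0, then B = κ|φ⟩⟨φ| for some scalar κ, D − (|κ|²/a)|φ⟩⟨φ| is positive semidefinite, and ρ_{01} = |η⟩⟨η| ⊗ |φ⟩⟨φ| + |α₁⟩⟨α₁| ⊗ (D − (|κ|²/a)|φ⟩⟨φ|) with |η⟩ = √a|α₀⟩ + (κ̄/√a)|α₁⟩; hence ρ_{01} is separable across the cut ℂ²|H_Y. -/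
open Matrix Kronecker ComplexOrder


lemma vmv_psd {n : ℕ} (x : Fin n → ℂ) : (Matrix.vecMulVec x (star x)).PosSemidef := by
  refine Matrix.PosSemidef.of_dotProduct_mulVec_nonneg ?_ ?_
  · ext j k
    simp [Matrix.conjTranspose_apply, Matrix.vecMulVec_apply, mul_comm]
  · intro v
    have h : star v ⬝ᵥ (Matrix.vecMulVec x (star x)) *ᵥ v
        = star (star x ⬝ᵥ v) * (star x ⬝ᵥ v) := by
      simp [dotProduct, Matrix.mulVec, Matrix.vecMulVec_apply, Finset.mul_sum,
        Finset.sum_mul, mul_comm, mul_left_comm]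
      rw [Finset.sum_comm]
    rw [h]
    exact star_mul_self_nonneg _

lemma vmv_mulVec {n : ℕ} (x y w : Fin n → ℂ) :
    Matrix.vecMulVec x y *ᵥ w = (y ⬝ᵥ w) • x := by
  ext j
  simp [Matrix.mulVec, Matrix.vecMulVec_apply, dotProduct, Finset.sum_mul,
    Finset.mul_sum, mul_comm, mul_left_comm]

lemma conj_dot18 {n : ℕ} (B : Matrix (Fin n) (Fin n) ℂ) (u v : Fin n → ℂ) :
    (starRingEnd ℂ) (star v ⬝ᵥ Bᴴ *ᵥ u) = star u ⬝ᵥ B *ᵥ v := by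
  simp only [dotProduct, Matrix.mulVec, Matrix.conjTranspose_apply, Pi.star_apply,
    Complex.star_def, map_sum, _root_.map_mul, Complex.conj_conj, Finset.mul_sum]
  rw [Finset.sum_comm]
  congr 1; ext j
  exact Finset.sum_congr rfl fun k _ => by ring

lemma conj_dot {n : ℕ} (x y : Fin n → ℂ) :
    (starRingEnd ℂ) (star x ⬝ᵥ y) = star y ⬝ᵥ x := by
  simp only [dotProduct, Pi.star_apply, Complex.star_def, map_sum, _root_.map_mul,
    Complex.conj_conj]
  exact Finset.sum_congr rfl fun k _ => by ring

lemma quad18 {n : ℕ} (ρ : Matrix (Fin 2 × Fin n) (Fin 2 × Fin n) ℂ)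
    (hρ : ρ.PosSemidef)
    (A B D : Matrix (Fin n) (Fin n) ℂ)
    (hA : ∀ j k, A j k = ρ (0, j) (0, k))
    (hB : ∀ j k, B j k = ρ (0, j) (1, k))
    (hD : ∀ j k, D j k = ρ (1, j) (1, k))
    (u v : Fin n → ℂ) :
    0 ≤ star u ⬝ᵥ A *ᵥ u + star u ⬝ᵥ B *ᵥ v + star v ⬝ᵥ Bᴴ *ᵥ u + star v ⬝ᵥ D *ᵥ v := by
  have hH : ∀ j k, ρ (1, j) (0, k) = starRingEnd ℂ (ρ (0, k) (1, j)) := by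
    intro j k
    conv_lhs => rw [← hρ.1]
    simp [Matrix.conjTranspose_apply]
  have key := hρ.dotProduct_mulVec_nonneg (fun p => if p.1 = 0 then u p.2 else v p.2)
  have heq : star (fun p : Fin 2 × Fin n => if p.1 = 0 then u p.2 else v p.2) ⬝ᵥ
      ρ *ᵥ (fun p => if p.1 = 0 then u p.2 else v p.2)
      = star u ⬝ᵥ A *ᵥ u + star u ⬝ᵥ B *ᵥ v + star v ⬝ᵥ Bᴴ *ᵥ u + star v ⬝ᵥ D *ᵥ v := by
    simp only [dotProduct, Matrix.mulVec, Matrix.conjTranspose_apply, Pi.star_apply,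
      Fintype.sum_prod_type, Fin.sum_univ_two, hA, hB, hD]
    simp only [Fin.isValue, if_true, one_ne_zero, if_false, hB, hH, RingHom.map_mul,
      starRingEnd_self_apply, mul_add, Finset.sum_add_distrib, dotProduct]
    simp only [starRingEnd_apply]
    ring
  rw [heq] at key
  exact key

/-- Pure-contact separable decomposition. If ρ ≥ 0 on ℂ²⊗H_Y has block
form [[A,B],[B†,D]] with A = a|φ⟩⟨φ|, a > 0, and P_{supp A} B P_{Ker A} = 0, then
B = κ|φ⟩⟨φ| for some κ, D − (|κ|²/a)|φ⟩⟨φ| ≥ 0, and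
ρ = |η⟩⟨η| ⊗ |φ⟩⟨φ| + |α₁⟩⟨α₁| ⊗ (D − (|κ|²/a)|φ⟩⟨φ|) with
|η⟩ = √a|α₀⟩ + (κ̄/√a)|α₁⟩; hence ρ is separable. -/
theorem stmt18 {n : ℕ} (ρ : Matrix (Fin 2 × Fin n) (Fin 2 × Fin n) ℂ)
    (hρ : ρ.PosSemidef)
    (A B D : Matrix (Fin n) (Fin n) ℂ)
    (hA : ∀ j k, A j k = ρ (0, j) (0, k))
    (hB : ∀ j k, B j k = ρ (0, j) (1, k))
    (hD : ∀ j k, D j k = ρ (1, j) (1, k))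
    (φ : Fin n → ℂ) (hφ : ∑ j, Complex.normSq (φ j) = 1)
    (a : ℝ) (ha : 0 < a)
    (hAform : A = (a : ℂ) • Matrix.vecMulVec φ (star φ))
    (hBperp : Matrix.vecMulVec φ (star φ) * B
        * (1 - Matrix.vecMulVec φ (star φ)) = 0) :
    ∃ κ : ℂ,
      B = κ • Matrix.vecMulVec φ (star φ) ∧
      (D - ((‖κ‖ ^ 2 / a : ℝ) : ℂ) • Matrix.vecMulVec φ (star φ)).PosSemidef ∧
      ρ = Matrix.vecMulVec
            ![((Real.sqrt a : ℝ) : ℂ), (starRingEnd ℂ) κ / ((Real.sqrt a : ℝ) : ℂ)]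
            (star ![((Real.sqrt a : ℝ) : ℂ), (starRingEnd ℂ) κ / ((Real.sqrt a : ℝ) : ℂ)])
            ⊗ₖ Matrix.vecMulVec φ (star φ)
          + Matrix.vecMulVec ![(0 : ℂ), 1] (star ![(0 : ℂ), 1])
            ⊗ₖ (D - ((‖κ‖ ^ 2 / a : ℝ) : ℂ) • Matrix.vecMulVec φ (star φ)) ∧
      ∃ (k : ℕ) (P : Fin k → Matrix (Fin 2) (Fin 2) ℂ)
        (Q : Fin k → Matrix (Fin n) (Fin n) ℂ),
        (∀ i, (P i).PosSemidef ∧ (Q i).PosSemidef) ∧ ρ = ∑ i, P i ⊗ₖ Q i := by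
  set P : Matrix (Fin n) (Fin n) ℂ := Matrix.vecMulVec φ (star φ) with hP
  have hφ1 : star φ ⬝ᵥ φ = 1 := by
    have h1 : (↑(∑ j, Complex.normSq (φ j)) : ℂ) = 1 := by rw [hφ]; norm_num
    rw [← h1]
    push_cast
    simp [dotProduct, Complex.normSq_eq_conj_mul_self]
  have ha0 : (a : ℂ) ≠ 0 := by exact_mod_cast ha.ne'
  -- kernel property
  have hker : ∀ u : Fin n → ℂ, star φ ⬝ᵥ u = 0 → Bᴴ *ᵥ u = 0 := by
    intro u hu
    have hAu : A *ᵥ u = 0 := by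
      rw [hAform, Matrix.smul_mulVec, hP, vmv_mulVec, hu]
      simp
    funext j
    set z := (Bᴴ *ᵥ u) j with hz
    show z = 0
    by_contra hzne
    set v : Fin n → ℂ := Pi.single j 1 with hv
    have hzv : star v ⬝ᵥ Bᴴ *ᵥ u = z := by
      simp [hv, dotProduct, Pi.single_apply]
      exact hz.symm
    have hd0 : 0 ≤ star v ⬝ᵥ D *ᵥ v := by
      have := quad18 ρ hρ A B D hA hB hD 0 v
      simpa using this
    set d : ℂ := star v ⬝ᵥ D *ᵥ v with hdd
    have hdre : 0 ≤ d.re := by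
      rw [Complex.le_def] at hd0; simpa using hd0.1
    set r : ℝ := -(1 / (d.re + 1)) with hr
    set c : ℂ := (r : ℂ) * z with hc
    have key := quad18 ρ hρ A B D hA hB hD u (c • v)
    have hBuv : star u ⬝ᵥ B *ᵥ v = (starRingEnd ℂ) z := by
      rw [← hzv, ← conj_dot18 B u v]
    have hexp : star u ⬝ᵥ A *ᵥ u + star u ⬝ᵥ B *ᵥ (c • v) + star (c • v) ⬝ᵥ Bᴴ *ᵥ u
        + star (c • v) ⬝ᵥ D *ᵥ (c • v)
        = ((2 * r * Complex.normSq z : ℝ) : ℂ)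
          + ((r ^ 2 * Complex.normSq z : ℝ) : ℂ) * d := by
      rw [hAu]
      rw [Matrix.mulVec_smul, dotProduct_smul, star_smul, smul_dotProduct,
        Matrix.mulVec_smul, dotProduct_smul, smul_dotProduct]
      rw [hzv, hBuv, ← hdd]
      simp only [smul_eq_mul, dotProduct_zero, hc, star_mul', Complex.star_def,
        Complex.conj_ofReal]
      have hzz : z * (starRingEnd ℂ) z = (Complex.normSq z : ℂ) := Complex.mul_conj z
      push_cast
      linear_combination (2 * (r : ℂ) + (r : ℂ) ^ 2 * d) * hzz
    rw [hexp] at key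
    rw [Complex.le_def] at key
    have hre : 0 ≤ 2 * r * Complex.normSq z + r ^ 2 * Complex.normSq z * d.re := by
      have h5 := key.1
      have h6 : (((2 * r * Complex.normSq z : ℝ) : ℂ)
          + ((r ^ 2 * Complex.normSq z : ℝ) : ℂ) * d).re
          = 2 * r * Complex.normSq z + r ^ 2 * Complex.normSq z * d.re := by
        rw [Complex.add_re, Complex.ofReal_re, Complex.re_ofReal_mul]
      rw [h6] at h5
      simpa using h5
    have hnz : 0 < Complex.normSq z := Complex.normSq_pos.mpr hzne
    have hdr1 : (0 : ℝ) < d.re + 1 := by linarith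
    have hrneg : r < 0 := by
      have h7 : (0 : ℝ) < 1 / (d.re + 1) := by positivity
      rw [hr]; linarith
    have hr2 : 0 < 2 + r * d.re := by
      rw [hr]
      have h3 : d.re / (d.re + 1) < 1 := by rw [div_lt_one hdr1]; linarith
      have : -(1 / (d.re + 1)) * d.re = -(d.re / (d.re + 1)) := by ring
      rw [this]; linarith
    have hfact : 2 * r * Complex.normSq z + r ^ 2 * Complex.normSq z * d.re
        = (r * Complex.normSq z) * (2 + r * d.re) := by ring
    have hlt : (r * Complex.normSq z) * (2 + r * d.re) < 0 :=
      mul_neg_of_neg_of_pos (mul_neg_of_neg_of_pos hrneg hnz) hr2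
    rw [hfact] at hre
    linarith
  -- matrix identity: Bᴴ (1-P) = 0
  have hBH : Bᴴ * (1 - P) = 0 := by
    ext j k
    have hu : star φ ⬝ᵥ (fun l => (1 - P) l k) = 0 := by
      have h1 : star φ ⬝ᵥ (fun l => (1 - P) l k)
          = (starRingEnd ℂ) (φ k) - (star φ ⬝ᵥ φ) * (starRingEnd ℂ) (φ k) := by
        simp only [hP, Matrix.sub_apply, Matrix.one_apply, Matrix.vecMulVec_apply,
          dotProduct, Pi.star_apply, mul_sub, Finset.sum_sub_distrib, Finset.sum_mul,
          mul_ite, mul_one, mul_zero, Finset.sum_ite_eq', Finset.mem_univ, if_true,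
          starRingEnd_apply]
        congr 1
        exact Finset.sum_congr rfl fun l _ => by ring
      rw [h1, hφ1]; ring
    have h2 := congrFun (hker _ hu) j
    simpa [Matrix.mul_apply, Matrix.mulVec, dotProduct] using h2
  have hPB : B = P * B := by
    have h1 : (1 - P) * B = 0 := by
      have h := congrArg Matrix.conjTranspose hBH
      rw [Matrix.conjTranspose_mul, Matrix.conjTranspose_sub, Matrix.conjTranspose_one,
        Matrix.conjTranspose_zero] at h
      rw [Matrix.conjTranspose_conjTranspose] at h
      rwa [show Pᴴ = P from (vmv_psd φ).1] at h
    have h2 : B - P * B = 0 := by rw [← h1]; rw [sub_mul, one_mul]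
    exact (sub_eq_zero.mp h2)
  set κ : ℂ := star φ ⬝ᵥ B *ᵥ φ with hκ
  have hPBP : P * B * P = κ • P := by
    ext j k
    simp only [hP, hκ, Matrix.mul_apply, Matrix.vecMulVec_apply, Matrix.smul_apply,
      dotProduct, Matrix.mulVec, Pi.star_apply, smul_eq_mul, Finset.sum_mul,
      Finset.mul_sum]
    rw [Finset.sum_comm]
    congr 1; ext l; congr 1; ext m; ring
  have hBform : B = κ • P := by
    have h2 : P * B = P * B * P := by
      have h := mul_sub (P * B) 1 P
      rw [hBperp, mul_one] at h
      exact sub_eq_zero.mp h.symm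
    rw [hPB, h2]; exact hPBP
  -- coefficient
  set κ2 : ℂ := ((‖κ‖ ^ 2 / a : ℝ) : ℂ) with hκ2
  have hherm : ∀ p q : Fin 2 × Fin n, ρ p q = (starRingEnd ℂ) (ρ q p) := by
    intro p q
    conv_lhs => rw [← hρ.1]
    simp [Matrix.conjTranspose_apply]
  have hDH : Dᴴ = D := by
    ext j k
    rw [Matrix.conjTranspose_apply, hD, hD, hherm (1, j) (1, k)]
    rfl
  have hκ2star : star κ2 = κ2 := by
    rw [hκ2, Complex.star_def, Complex.conj_ofReal]
  have hκκ : κ2 * (a : ℂ) = κ * (starRingEnd ℂ) κ := by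
    rw [hκ2, Complex.mul_conj, Complex.sq_norm, ← Complex.ofReal_mul,
      div_mul_cancel₀ _ ha.ne']
  have hPφ : P *ᵥ φ = φ := by rw [hP, vmv_mulVec, hφ1, one_smul]
  have hBH2 : Bᴴ = (starRingEnd ℂ) κ • P := by
    rw [hBform, Matrix.conjTranspose_smul, show Pᴴ = P from (vmv_psd φ).1]
    rfl
  -- positivity of the Schur complement
  have hM : (D - κ2 • P).PosSemidef := by
    refine Matrix.PosSemidef.of_dotProduct_mulVec_nonneg ?_ ?_
    · show (D - κ2 • P)ᴴ = _
      rw [Matrix.conjTranspose_sub, Matrix.conjTranspose_smul,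
        show Pᴴ = P from (vmv_psd φ).1, hDH, hκ2star]
    · intro v
      set s : ℂ := star φ ⬝ᵥ v with hs
      set c : ℂ := -(κ * s) / a with hc
      have hPv : P *ᵥ v = s • φ := by rw [hP, vmv_mulVec, ← hs]
      have key := quad18 ρ hρ A B D hA hB hD (c • φ) v
      have t1 : star (c • φ) ⬝ᵥ A *ᵥ (c • φ) = (starRingEnd ℂ) c * c * a := by
        rw [hAform, Matrix.smul_mulVec, Matrix.mulVec_smul, hPφ, star_smul]
        rw [smul_dotProduct, dotProduct_smul, dotProduct_smul, hφ1]
        simp [Complex.star_def]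
        ring
      have t2 : star (c • φ) ⬝ᵥ B *ᵥ v = (starRingEnd ℂ) c * (κ * s) := by
        rw [hBform, Matrix.smul_mulVec, hPv, star_smul]
        rw [smul_dotProduct, dotProduct_smul, dotProduct_smul, hφ1]
        simp [Complex.star_def]
      have t3 : star v ⬝ᵥ Bᴴ *ᵥ (c • φ) = (starRingEnd ℂ) κ * c * (starRingEnd ℂ) s := by
        rw [hBH2, Matrix.smul_mulVec, Matrix.mulVec_smul, hPφ]
        rw [dotProduct_smul, dotProduct_smul]
        rw [show star v ⬝ᵥ φ = (starRingEnd ℂ) s by rw [hs, conj_dot]]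
        simp
        ring
      have tP : star v ⬝ᵥ (κ2 • P) *ᵥ v = κ2 * (s * (starRingEnd ℂ) s) := by
        rw [Matrix.smul_mulVec, hPv, dotProduct_smul, dotProduct_smul]
        rw [show star v ⬝ᵥ φ = (starRingEnd ℂ) s by rw [hs, conj_dot]]
        simp
      have hE : star (c • φ) ⬝ᵥ A *ᵥ (c • φ) + star (c • φ) ⬝ᵥ B *ᵥ v
          + star v ⬝ᵥ Bᴴ *ᵥ (c • φ) + star v ⬝ᵥ D *ᵥ v
          = star v ⬝ᵥ (D - κ2 • P) *ᵥ v := by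
        rw [Matrix.sub_mulVec, dotProduct_sub, t1, t2, t3, tP]
        have hcconj : (starRingEnd ℂ) c = -((starRingEnd ℂ) κ * (starRingEnd ℂ) s) / a := by
          rw [hc]
          simp [map_div₀, Complex.conj_ofReal]
        rw [hc, hcconj]
        field_simp
        linear_combination (s * (starRingEnd ℂ) s) * hκκ
      rw [hE] at key
      exact key
  -- the decomposition
  have hsa : ((Real.sqrt a : ℝ) : ℂ) * ((Real.sqrt a : ℝ) : ℂ) = (a : ℂ) := by
    rw [← Complex.ofReal_mul, Real.mul_self_sqrt ha.le]
  have hsa0 : ((Real.sqrt a : ℝ) : ℂ) ≠ 0 := by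
    simpa using (Complex.ofReal_ne_zero.mpr (Real.sqrt_ne_zero'.mpr ha))
  have hdec : ρ = Matrix.vecMulVec
            ![((Real.sqrt a : ℝ) : ℂ), (starRingEnd ℂ) κ / ((Real.sqrt a : ℝ) : ℂ)]
            (star ![((Real.sqrt a : ℝ) : ℂ), (starRingEnd ℂ) κ / ((Real.sqrt a : ℝ) : ℂ)])
            ⊗ₖ P
          + Matrix.vecMulVec ![(0 : ℂ), 1] (star ![(0 : ℂ), 1]) ⊗ₖ (D - κ2 • P) := by
    ext ⟨i, j⟩ ⟨i', k⟩
    fin_cases i <;> fin_cases i' <;>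
      simp only [Matrix.add_apply, Matrix.kroneckerMap_apply, Matrix.vecMulVec_apply,
        Pi.star_apply, Matrix.cons_val_zero, Matrix.cons_val_one, Matrix.head_cons,
        Matrix.sub_apply, Matrix.smul_apply, smul_eq_mul, Complex.star_def, map_zero,
        _root_.map_one, map_div₀, Complex.conj_conj, Complex.conj_ofReal, zero_mul, mul_zero,
        one_mul, mul_one, add_zero, zero_add, Fin.mk_zero, Fin.mk_one, Fin.isValue]
    · rw [← hA j k, hAform]
      simp only [Matrix.smul_apply, smul_eq_mul, hsa]
    · rw [← hB j k, hBform]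
      rw [Matrix.smul_apply, smul_eq_mul, mul_div_assoc', mul_div_cancel_left₀ _ hsa0]
    · rw [hherm (1, j) (0, k), ← hB k j, hBform]
      rw [div_mul_cancel₀ _ hsa0, Matrix.smul_apply, smul_eq_mul, _root_.map_mul]
      have h8 := congrFun (congrFun (vmv_psd φ).1 j) k
      rw [Matrix.conjTranspose_apply] at h8
      rw [← hP] at h8
      rw [show ((starRingEnd ℂ) (P k j) : ℂ) = star (P k j) from rfl, h8]
    · rw [← hD j k]
      rw [div_mul_div_comm, hsa]
      rw [show (starRingEnd ℂ) κ * κ / (a : ℂ) = κ2 from by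
        rw [div_eq_iff ha0, mul_comm ((starRingEnd ℂ) κ) κ]; exact hκκ.symm]
      ring
  refine ⟨κ, hBform, hM, hdec,
    2,
    ![Matrix.vecMulVec ![((Real.sqrt a : ℝ) : ℂ), (starRingEnd ℂ) κ / ((Real.sqrt a : ℝ) : ℂ)]
        (star ![((Real.sqrt a : ℝ) : ℂ), (starRingEnd ℂ) κ / ((Real.sqrt a : ℝ) : ℂ)]),
      Matrix.vecMulVec ![(0 : ℂ), 1] (star ![(0 : ℂ), 1])],
    ![P, D - κ2 • P], ?_, ?_⟩
  · intro i
    fin_cases i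
    · exact ⟨vmv_psd _, by rw [hP]; exact vmv_psd φ⟩
    · exact ⟨vmv_psd _, hM⟩
  · rw [Fin.sum_univ_two]
    simpa using hdec
end
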